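/- A |w|-Hom-configuration has at most |w| isolated vertices with no overarc. -/
import Mathlib


/- Combinatorial model of the triangulated category `T_w` generated by a `w`-spherical
object (`w ≤ -1`), via `d`-admissible arcs of the ∞-gon, where `d = w - 1`,
`|d| = 1 - w`, `|w| = -w`. -/

namespace SphericalArcs

/-- An arc is a pair of integers `(t, u)`. -/
abbrev Arc : Type := ℤ × ℤ

/-- `(t,u)` is a `d`-admissible arc: `t > u`, `t - u ≥ |d| - 1 = -w` and
`t - u ≡ -1 (mod |d|)`, i.e. `(1 - w) ∣ (t - u + 1)`. -/
def Adm (w : ℤ) (a : Arc) : Prop :=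
  a.2 < a.1 ∧ -w ≤ a.1 - a.2 ∧ (1 - w) ∣ (a.1 - a.2 + 1)

/-- `k(t,u) = (t - u + 1) / |d|`. -/
def kk (w : ℤ) (a : Arc) : ℤ := (a.1 - a.2 + 1) / (1 - w)

/-- `c ∈ F⁺(a)`: `c = (x,y)` is `d`-admissible, `x = a.1 + i·d` for some
`0 ≤ i ≤ k(a) - 1`, and `y ≤ a.2`. -/
def Fplus (w : ℤ) (a c : Arc) : Prop :=
  Adm w c ∧ (∃ i : ℤ, 0 ≤ i ∧ i ≤ kk w a - 1 ∧ c.1 = a.1 + i * (w - 1)) ∧ c.2 ≤ a.2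

/-- `c ∈ F⁻(a)`: `c = (x,y)` is `d`-admissible, `y = a.2 - i·d` for some
`0 ≤ i ≤ k(a) - 1`, and `x ≥ a.1`. -/
def Fminus (w : ℤ) (a c : Arc) : Prop :=
  Adm w c ∧ (∃ i : ℤ, 0 ≤ i ∧ i ≤ kk w a - 1 ∧ c.2 = a.2 - i * (w - 1)) ∧ a.1 ≤ c.1

/-- The Serre functor: `S(t,u) = (t - w, u - w)`. -/
def Serre (w : ℤ) (a : Arc) : Arc := (a.1 - w, a.2 - w)

/-- `Hom(a,c) ≠ 0` iff `c ∈ F⁺(a) ∪ F⁻(S(a))`. -/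
def HomNe (w : ℤ) (a c : Arc) : Prop := Fplus w a c ∨ Fminus w (Serre w a) c

/-- `Ext^j(a,b) ≠ 0` iff `Hom(a, Σ^j b) ≠ 0`, where `Σ^j b = (b.1 - j, b.2 - j)`. -/
def ExtNe (w : ℤ) (j : ℤ) (a b : Arc) : Prop := HomNe w a (b.1 - j, b.2 - j)

/-- Two arcs `(t,u)` and `(t',u')` cross if `u < u' < t < t'` or `u' < u < t' < t`. -/
def Cross (a b : Arc) : Prop :=
  (a.2 < b.2 ∧ b.2 < a.1 ∧ a.1 < b.1) ∨ (b.2 < a.2 ∧ a.2 < b.1 ∧ b.1 < a.1)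

/-- Two arcs share a vertex if `{t,u} ∩ {t',u'} ≠ ∅`. -/
def ShareVertex (a b : Arc) : Prop :=
  a.1 = b.1 ∨ a.1 = b.2 ∨ a.2 = b.1 ∨ a.2 = b.2

/-- A `|w|`-Hom-configuration: a set `H` of `d`-admissible arcs such that a
`d`-admissible arc `h` belongs to `H` iff `Ext^i(x,h) = 0` for every `x ∈ H` and
`i ∈ {w+1, …, -1}`, and `Ext^i(x,h) = 0` for every `x ∈ H \ {h}` and `i ∈ {0, w}`. -/
def IsHomConfig (w : ℤ) (H : Set Arc) : Prop :=
  (∀ h ∈ H, Adm w h) ∧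
  ∀ h : Arc, Adm w h →
    (h ∈ H ↔
      (∀ x ∈ H, ∀ i : ℤ, w + 1 ≤ i → i ≤ -1 → ¬ ExtNe w i x h) ∧
      (∀ x ∈ H, x ≠ h → ¬ ExtNe w 0 x h ∧ ¬ ExtNe w w x h))

/-- `v` is an isolated vertex of `H`: it is not an endpoint of any arc of `H`. -/
def Isolated (H : Set Arc) (v : ℤ) : Prop := ∀ a ∈ H, a.1 ≠ v ∧ a.2 ≠ v

/-- `a ∈ H` is an overarc of `v`: `a.2 < v < a.1`. -/
def IsOverarc (H : Set Arc) (a : Arc) (v : ℤ) : Prop := a ∈ H ∧ a.2 < v ∧ v < a.1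

/-- `a` is the smallest overarc of `v` in `H`. -/
def IsSmallestOverarc (H : Set Arc) (a : Arc) (v : ℤ) : Prop :=
  IsOverarc H a v ∧ ∀ b : Arc, IsOverarc H b v → b.2 ≤ a.2 ∧ a.1 ≤ b.1

/-- The set of isolated vertices of `H` having no overarc in `H`. -/
def NoOverarcIsolated (H : Set Arc) : Set ℤ :=
  {v | Isolated H v ∧ ∀ a : Arc, ¬ IsOverarc H a v}

/-- A left `|w|`-Riedtmann configuration. -/
def IsLeftRiedtmann (w : ℤ) (C : Set Arc) : Prop :=
  (∀ c ∈ C, Adm w c) ∧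
  (∀ x ∈ C, ∀ y ∈ C, x ≠ y → ∀ i : ℤ, w ≤ i → i ≤ 0 → ¬ ExtNe w i x y) ∧
  ∀ z : Arc, Adm w z → ∃ x ∈ C, ∃ i : ℤ, w + 1 ≤ i ∧ i ≤ 0 ∧ ExtNe w i x z

/-- A right `|w|`-Riedtmann configuration. -/
def IsRightRiedtmann (w : ℤ) (C : Set Arc) : Prop :=
  (∀ c ∈ C, Adm w c) ∧
  (∀ x ∈ C, ∀ y ∈ C, x ≠ y → ∀ i : ℤ, w ≤ i → i ≤ 0 → ¬ ExtNe w i x y) ∧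
  ∀ z : Arc, Adm w z → ∃ x ∈ C, ∃ i : ℤ, w + 1 ≤ i ∧ i ≤ 0 ∧ ExtNe w i z x

/-! ### Auxiliary blocking predicate -/

def BlocksP (w : ℤ) (x h : Arc) : Prop :=
  h.2 + (x.1 - h.1) % (1 - w) ≤ x.2 ∧ x.2 < h.1 + (x.1 - h.1) % (1 - w) ∧
    h.1 + (x.1 - h.1) % (1 - w) ≤ x.1

def BlocksM (w : ℤ) (x h : Arc) : Prop :=
  x.2 + -w ≤ h.2 + (x.1 - h.2) % (1 - w) ∧ h.2 + (x.1 - h.2) % (1 - w) ≤ x.1 ∧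
    x.1 ≤ h.1 + (x.1 - h.2) % (1 - w) + w

def Blocks (w : ℤ) (x h : Arc) : Prop := BlocksP w x h ∨ BlocksM w x h

lemma adm_shift {w : ℤ} {h : Arc} (p : ℤ) (hh : Adm w h) : Adm w (h.1 + p, h.2 + p) := by
  obtain ⟨h1, h2, h3⟩ := hh
  refine ⟨by simpa using by omega, by simpa using by omega, ?_⟩
  have e : (h.1 + p, h.2 + p).1 - (h.1 + p, h.2 + p).2 + 1 = h.1 - h.2 + 1 := by
    simp only; ring
  rw [e]; exact h3

lemma kk_eq {w : ℤ} (hw : w ≤ -1) (x : Arc) (K : ℤ) (hK : x.1 - x.2 + 1 = (1 - w) * K) :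
    kk w x = K := by
  unfold kk; rw [hK, Int.mul_ediv_cancel_left _ (by omega)]

lemma blocks_of_extNe {w : ℤ} (hw : w ≤ -1) {x h : Arc} (hx : Adm w x)
    {i : ℤ} (hi1 : w ≤ i) (hi2 : i ≤ 0) (he : ExtNe w i x h) : Blocks w x h := by
  obtain ⟨K, hK⟩ := hx.2.2
  have hm : (0:ℤ) < 1 - w := by omega
  rcases he with ⟨hadm, ⟨k, hk0, hk1, hc1⟩, hc2⟩ | ⟨hadm, ⟨k, hk0, hk1, hc2⟩, hc1⟩
  · -- Fplus case
    rw [kk_eq hw x K hK] at hk1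
    simp only at hc1 hc2
    -- hc1 : h.1 - i = x.1 + k * (w - 1)
    left
    have hmod : (x.1 - h.1) % (1 - w) = -i := by
      have e : x.1 - h.1 = -i + k * (1 - w) := by linarith [hc1]
      rw [e, Int.add_mul_emod_self_right, Int.emod_eq_of_lt (by omega) (by omega)]
    have hkK : k * (1 - w) ≤ (K - 1) * (1 - w) :=
      mul_le_mul_of_nonneg_right (by omega) (by omega)
    refine ⟨?_, ?_, ?_⟩ <;> rw [hmod] <;> nlinarith [hc1, hc2, hK, hk0, hx.2.1]
  · -- Fminus case
    have hKs : kk w (Serre w x) = K := by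
      apply kk_eq hw
      show (x.1 - w) - (x.2 - w) + 1 = (1 - w) * K
      linarith [hK]
    rw [hKs] at hk1
    simp only [Serre] at hc1 hc2
    -- hc2 : h.2 - i = (x.2 - w) - k * (w - 1),  hc1 : x.1 - w ≤ h.1 - i
    right
    have hmod : (x.1 - h.2) % (1 - w) = -i := by
      have e : x.1 - h.2 = -i + (K - 1 - k) * (1 - w) := by nlinarith [hc2, hK]
      rw [e, Int.add_mul_emod_self_right, Int.emod_eq_of_lt (by omega) (by omega)]
    have hkK : k * (1 - w) ≤ (K - 1) * (1 - w) :=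
      mul_le_mul_of_nonneg_right (by omega) (by omega)
    refine ⟨?_, ?_, ?_⟩ <;> rw [hmod] <;> nlinarith [hc1, hc2, hK, hk0]

lemma extNe_of_blocks {w : ℤ} (hw : w ≤ -1) {x h : Arc} (hx : Adm w x) (hh : Adm w h)
    (hb : Blocks w x h) : ∃ i : ℤ, w ≤ i ∧ i ≤ 0 ∧ ExtNe w i x h := by
  obtain ⟨K, hK⟩ := hx.2.2
  have hm : (0:ℤ) < 1 - w := by omega
  rcases hb with ⟨b1, b2, b3⟩ | ⟨b1, b2, b3⟩
  · set p := (x.1 - h.1) % (1 - w) with hp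
    have hp0 : 0 ≤ p := Int.emod_nonneg _ (by omega)
    have hplt : p < 1 - w := Int.emod_lt_of_pos _ hm
    refine ⟨-p, by omega, by omega, ?_⟩
    left
    have hkk : x.1 - h.1 - p = (1 - w) * ((x.1 - h.1) / (1 - w)) := by
      have := Int.emod_def (x.1 - h.1) (1 - w)
      omega
    set k := (x.1 - h.1) / (1 - w) with hkdef
    have hk0 : 0 ≤ k := by nlinarith [hkk]
    -- x.2 + (1 - w) ≤ h.1 + p + 1  via divisibility
    have hdvd2 : (1 - w) ∣ (h.1 + p + 1 - x.2) := by
      have : h.1 + p + 1 - x.2 = (x.1 - x.2 + 1) - (x.1 - h.1 - p) := by ring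
      rw [this, hK, hkk]
      exact Dvd.dvd.sub (Dvd.intro _ rfl) (Dvd.intro _ rfl)
    have hge : 1 - w ≤ h.1 + p + 1 - x.2 := Int.le_of_dvd (by omega) hdvd2
    have hkK : k ≤ K - 1 := by nlinarith [hkk, hK]
    refine ⟨?_, ⟨k, hk0, ?_, ?_⟩, ?_⟩
    · show Adm w (h.1 - -p, h.2 - -p)
      simp only [sub_neg_eq_add]
      exact adm_shift p hh
    · rw [kk_eq hw x K hK]; omega
    · show h.1 - -p = x.1 + k * (w - 1)
      linarith [hkk]
    · show h.2 - -p ≤ x.2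
      linarith [b1]
  · set q := (x.1 - h.2) % (1 - w) with hq
    have hq0 : 0 ≤ q := Int.emod_nonneg _ (by omega)
    have hqlt : q < 1 - w := Int.emod_lt_of_pos _ hm
    refine ⟨-q, by omega, by omega, ?_⟩
    right
    have hdvd : (1 - w) ∣ (h.2 + q - x.2 + w) := by
      have e1 : (1 - w) ∣ (x.1 - h.2 - q) := by
        have := Int.emod_def (x.1 - h.2) (1 - w)
        exact ⟨(x.1 - h.2) / (1 - w), by omega⟩
      have : h.2 + q - x.2 + w = (x.1 - x.2 + 1) - (1 - w) - (x.1 - h.2 - q) := by ring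
      rw [this, hK]
      exact dvd_sub (dvd_sub (Dvd.intro _ rfl) (dvd_refl _)) e1
    obtain ⟨k, hkk⟩ := hdvd
    have hk0 : 0 ≤ k := by nlinarith [hkk]
    have hkK : k ≤ K - 1 := by nlinarith [hkk, hK]
    have hKs : kk w (Serre w x) = K := by
      apply kk_eq hw
      show (x.1 - w) - (x.2 - w) + 1 = (1 - w) * K
      linarith [hK]
    refine ⟨?_, ⟨k, hk0, ?_, ?_⟩, ?_⟩
    · show Adm w (h.1 - -q, h.2 - -q)
      simp only [sub_neg_eq_add]
      exact adm_shift q hh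
    · rw [hKs]; omega
    · show h.2 - -q = (x.2 - w) - k * (w - 1)
      linarith [hkk]
    · show (x.1 - w) ≤ h.1 - -q
      linarith [b3]

lemma not_blocks_of_mem {w : ℤ} (hw : w ≤ -1) {H : Set Arc} (hH : IsHomConfig w H)
    {x y : Arc} (hx : x ∈ H) (hy : y ∈ H) (hxy : x ≠ y) : ¬ Blocks w x y := by
  intro hb
  obtain ⟨i, hi1, hi2, he⟩ := extNe_of_blocks hw (hH.1 x hx) (hH.1 y hy) hb
  have hr := (hH.2 y (hH.1 y hy)).mp hy
  have : (w + 1 ≤ i ∧ i ≤ -1) ∨ i = 0 ∨ i = w := by omega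
  rcases this with ⟨h1, h2⟩ | rfl | rfl
  · exact hr.1 x hx i h1 h2 he
  · exact (hr.2 x hx hxy).1 he
  · exact (hr.2 x hx hxy).2 he

lemma blocked_of_notMem {w : ℤ} (hw : w ≤ -1) {H : Set Arc} (hH : IsHomConfig w H)
    {h : Arc} (hadm : Adm w h) (hh : h ∉ H) : ∃ x ∈ H, Blocks w x h := by
  by_contra hc
  push_neg at hc
  apply hh
  rw [hH.2 h hadm]
  refine ⟨fun x hx i h1 h2 he => hc x hx ?_, fun x hx hne => ⟨fun he => hc x hx ?_,
    fun he => hc x hx ?_⟩⟩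
  · exact blocks_of_extNe hw (hH.1 x hx) (by omega) (by omega) he
  · exact blocks_of_extNe hw (hH.1 x hx) (by omega) (by omega) he
  · exact blocks_of_extNe hw (hH.1 x hx) (by omega) (by omega) he

lemma dvd_cases {m t : ℤ} (hm : 0 < m) (h : m ∣ t) : t = 0 ∨ m ≤ t ∨ t ≤ -m := by
  obtain ⟨c, rfl⟩ := h
  rcases lt_trichotomy c 0 with hc | rfl | hc
  · right; right; nlinarith
  · left; ring
  · right; left; nlinarith

lemma emod_le_self {a b : ℤ} (ha : 0 ≤ a) (hb : 0 < b) : a % b ≤ a := by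
  have h1 := Int.emod_def a b
  have h2 : 0 ≤ a / b := Int.ediv_nonneg ha (by omega)
  nlinarith

lemma blocks_cross {w : ℤ} (hw : w ≤ -1) {x y : Arc} (hx : Adm w x) (hy : Adm w y)
    (h1 : x.2 < y.2) (h2 : y.2 ≤ x.1) (h3 : x.1 < y.1) : Blocks w x y := by
  right
  have hm : (0:ℤ) < 1 - w := by omega
  set q := (x.1 - y.2) % (1 - w) with hq
  have hq0 : 0 ≤ q := Int.emod_nonneg _ (by omega)
  have hqle : q ≤ x.1 - y.2 := emod_le_self (by omega) hm
  have hdq : (1 - w) ∣ (x.1 - y.2 - q) := by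
    have := Int.emod_def (x.1 - y.2) (1 - w)
    exact ⟨(x.1 - y.2) / (1 - w), by omega⟩
  obtain ⟨Kx, hKx⟩ := hx.2.2
  obtain ⟨Ky, hKy⟩ := hy.2.2
  refine ⟨?_, by omega, ?_⟩
  · -- x.2 + -w ≤ y.2 + q  i.e.  (y.2 - x.2) + q ≥ -w
    have hd : (1 - w) ∣ (y.2 - x.2 + q - -w) := by
      have e : y.2 - x.2 + q - -w = (x.1 - x.2 + 1) - (1 - w) - (x.1 - y.2 - q) := by ring
      rw [e, hKx]
      exact dvd_sub (dvd_sub (Dvd.intro _ rfl) (dvd_refl _)) hdq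
    rcases dvd_cases hm hd with h | h | h <;> omega
  · -- x.1 ≤ y.1 + q + w  i.e. (y.1 - x.1) + q ≥ -w
    have hd : (1 - w) ∣ (y.1 - x.1 + q - -w) := by
      have e : y.1 - x.1 + q - -w = (y.1 - y.2 + 1) - (1 - w) - (x.1 - y.2 - q) := by ring
      rw [e, hKy]
      exact dvd_sub (dvd_sub (Dvd.intro _ rfl) (dvd_refl _)) hdq
    rcases dvd_cases hm hd with h | h | h <;> omega

lemma blocks_samebot {w : ℤ} (hw : w ≤ -1) {x y : Arc} (hx : Adm w x) (hy : Adm w y)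
    (h1 : x.2 = y.2) (h2 : x.1 ≤ y.1) : Blocks w x y := by
  right
  have hm : (0:ℤ) < 1 - w := by omega
  obtain ⟨Kx, hKx⟩ := hx.2.2
  have hq : (x.1 - y.2) % (1 - w) = -w := by
    have e : x.1 - y.2 = -w + (Kx - 1) * (1 - w) := by
      have : (Kx - 1) * (1 - w) = (1 - w) * Kx - (1 - w) := by ring
      omega
    rw [e, Int.add_mul_emod_self_right, Int.emod_eq_of_lt (by omega) (by omega)]
  simp only [BlocksM]
  rw [hq]
  have := hx.2.1
  refine ⟨by omega, by omega, by omega⟩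

lemma blocks_sametop {w : ℤ} (hw : w ≤ -1) {x y : Arc} (hx : Adm w x) (hy : Adm w y)
    (h1 : x.1 = y.1) (h2 : y.2 ≤ x.2) : Blocks w x y := by
  left
  have hp : (x.1 - y.1) % (1 - w) = 0 := by rw [h1, sub_self, Int.zero_emod]
  simp only [BlocksP]
  rw [hp]
  have h3 := hx.2.1
  have h4 := hx.2.1
  refine ⟨by omega, by omega, by omega⟩

/-- Members of a Hom-configuration are pairwise disjoint or strictly nested. -/
lemma nested_or_disjoint {w : ℤ} (hw : w ≤ -1) {H : Set Arc} (hH : IsHomConfig w H)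
    {x y : Arc} (hx : x ∈ H) (hy : y ∈ H) (hne : x ≠ y) :
    x.1 < y.2 ∨ y.1 < x.2 ∨ (x.2 < y.2 ∧ y.1 < x.1) ∨ (y.2 < x.2 ∧ x.1 < y.1) := by
  by_contra hc
  push_neg at hc
  obtain ⟨c1, c2, c3, c4⟩ := hc
  have hax := hH.1 x hx
  have hay := hH.1 y hy
  rcases lt_trichotomy x.2 y.2 with h | h | h
  · rcases lt_trichotomy x.1 y.1 with h' | h' | h'
    · exact not_blocks_of_mem hw hH hx hy hne (blocks_cross hw hax hay h c1 h')
    · exact not_blocks_of_mem hw hH hy hx (Ne.symm hne)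
        (blocks_sametop hw hay hax h'.symm h.le)
    · exact absurd (c3 h) (by omega)
  · rcases le_or_gt x.1 y.1 with h' | h'
    · exact not_blocks_of_mem hw hH hx hy hne (blocks_samebot hw hax hay h h')
    · exact not_blocks_of_mem hw hH hy hx (Ne.symm hne) (blocks_samebot hw hay hax h.symm h'.le)
  · rcases lt_trichotomy y.1 x.1 with h' | h' | h'
    · exact not_blocks_of_mem hw hH hy hx (Ne.symm hne) (blocks_cross hw hay hax h c2 h')
    · exact not_blocks_of_mem hw hH hx hy hne (blocks_sametop hw hax hay h'.symm h.le)
    · exact absurd (c4 h) (by omega)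

/-- Ban A: two isolated-no-overarc vertices never differ by `-1` mod `1-w`. -/
lemma banA {w : ℤ} (hw : w ≤ -1) {H : Set Arc} (hH : IsHomConfig w H)
    {v v' : ℤ} (hv : v ∈ NoOverarcIsolated H) (hv' : v' ∈ NoOverarcIsolated H)
    (hlt : v < v') (hdvd : (1 - w) ∣ (v' - v + 1)) : False := by
  have hm : (0:ℤ) < 1 - w := by omega
  have hD : -w ≤ v' - v := by
    rcases dvd_cases hm hdvd with h | h | h <;> omega
  have hadm : Adm w ((v', v) : Arc) := ⟨hlt, hD, hdvd⟩
  have hnot : ((v', v) : Arc) ∉ H := fun hmem => (hv.1 _ hmem).2 rfl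
  obtain ⟨x, hxH, hb⟩ := blocked_of_notMem hw hH hadm hnot
  have hax := hH.1 x hxH
  obtain ⟨Kx, hKx⟩ := hax.2.2
  have hviso := hv.1 x hxH
  have hv'iso := hv'.1 x hxH
  have hvno : ¬ (x.2 < v ∧ v < x.1) := fun hc => hv.2 x ⟨hxH, hc⟩
  have hv'no : ¬ (x.2 < v' ∧ v' < x.1) := fun hc => hv'.2 x ⟨hxH, hc⟩
  rcases hb with ⟨b1, b2, b3⟩ | ⟨b1, b2, b3⟩
  · -- P case
    simp only at b1 b2 b3
    set p := (x.1 - v') % (1 - w) with hp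
    have hp0 : 0 ≤ p := Int.emod_nonneg _ (by omega)
    have hplt : p < 1 - w := Int.emod_lt_of_pos _ hm
    have hdp : (1 - w) ∣ (x.1 - v' - p) := by
      have := Int.emod_def (x.1 - v') (1 - w)
      exact ⟨(x.1 - v') / (1 - w), by omega⟩
    -- x.2 > v', and x.2 ≡ v' + p + 1 mod (1-w), v' < x.2 < v' + p : contradiction
    have hx2v : v < x.2 := by
      rcases lt_trichotomy x.2 v with h | h | h
      · exfalso; exact hvno ⟨h, by omega⟩
      · exact absurd h hviso.2
      · exact h
    have hx1v' : v' < x.1 := by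
      rcases lt_trichotomy x.1 v' with h | h | h
      · omega
      · exact absurd h hv'iso.1
      · exact h
    have hx2v' : v' < x.2 := by
      rcases lt_trichotomy x.2 v' with h | h | h
      · exact absurd ⟨h, hx1v'⟩ hv'no
      · exact absurd h hv'iso.2
      · exact h
    -- congruence contradiction
    have hd2 : (1 - w) ∣ (x.2 - v' - p - 1) := by
      have e : x.2 - v' - p - 1 = (x.1 - v' - p) - (x.1 - x.2 + 1) := by ring
      rw [e, hKx]
      exact dvd_sub hdp (Dvd.intro _ rfl)
    rcases dvd_cases hm hd2 with h | h | h <;> omega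
  · -- M case
    simp only at b1 b2 b3
    set q := (x.1 - v) % (1 - w) with hq
    have hq0 : 0 ≤ q := Int.emod_nonneg _ (by omega)
    have hqlt : q < 1 - w := Int.emod_lt_of_pos _ hm
    have hx2 : x.2 < v := by
      rcases lt_trichotomy x.2 v with h | h | h
      · exact h
      · exact absurd h hviso.2
      · omega
    have hx1 : v < x.1 := by
      rcases lt_trichotomy x.1 v with h | h | h
      · omega
      · exact absurd h hviso.1
      · exact h
    exact hvno ⟨hx2, hx1⟩


/-- Counting lemma: a family of intervals with sizes divisible by `1-w`, pairwise
disjoint or strictly nested, covering exactly `[α, β]`, forces `(1-w) ∣ β + 1 - α`. -/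
lemma cover_dvd {w : ℤ} (hw : w ≤ -1) :
    ∀ N : ℕ, ∀ α β : ℤ, β + 1 - α = (N : ℤ) →
    ∀ S : Set Arc,
      (∀ x ∈ S, α ≤ x.2 ∧ x.1 ≤ β ∧ (1 - w) ∣ (x.1 - x.2 + 1)) →
      (∀ x ∈ S, ∀ y ∈ S, x = y ∨ x.1 < y.2 ∨ y.1 < x.2 ∨
        (x.2 < y.2 ∧ y.1 < x.1) ∨ (y.2 < x.2 ∧ x.1 < y.1)) →
      (∀ p : ℤ, α ≤ p → p ≤ β → ∃ x ∈ S, x.2 ≤ p ∧ p ≤ x.1) →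
      (1 - w) ∣ (β + 1 - α) := by
  intro N
  induction N using Nat.strong_induction_on with
  | _ N IH =>
    intro α β hN S hbound hpair hcov
    rcases le_or_gt α β with hle | hlt
    · -- get the widest arc starting at α
      have hPex : ∃ c : ℤ, ∃ x ∈ S, x.2 = α ∧ x.1 = c := by
        obtain ⟨x, hxS, hx2, hx1⟩ := hcov α le_rfl hle
        exact ⟨x.1, x, hxS, le_antisymm hx2 (hbound x hxS).1, rfl⟩
      have hbdd : ∃ b : ℤ, ∀ c : ℤ, (∃ x ∈ S, x.2 = α ∧ x.1 = c) → c ≤ b :=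
        ⟨β, fun c ⟨x, hxS, _, hx1⟩ => hx1 ▸ (hbound x hxS).2.1⟩
      obtain ⟨c0, ⟨x0, hx0S, hx02, hx01⟩, hmax⟩ := Int.exists_greatest_of_bdd hbdd hPex
      have hαc0 : α ≤ c0 := by
        obtain ⟨z, hzS, hz2, hz1⟩ := hcov α le_rfl hle
        have : z.1 ≤ c0 := hmax z.1 ⟨z, hzS, le_antisymm hz2 (hbound z hzS).1, rfl⟩
        omega
      have hc0β : c0 ≤ β := hx01 ▸ (hbound x0 hx0S).2.1
      have hdvd0 : (1 - w) ∣ (c0 - α + 1) := by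
        have := (hbound x0 hx0S).2.2
        rwa [hx01, hx02] at this
      -- the rest is covered by arcs starting after c0
      have hcov' : ∀ p : ℤ, c0 + 1 ≤ p → p ≤ β →
          ∃ x : Arc, (x ∈ S ∧ c0 + 1 ≤ x.2) ∧ x.2 ≤ p ∧ p ≤ x.1 := by
        intro p hp1 hp2
        obtain ⟨x, hxS, hxc1, hxc2⟩ := hcov p (by omega) hp2
        refine ⟨x, ⟨hxS, ?_⟩, hxc1, hxc2⟩
        rcases hpair x hxS x0 hx0S with rfl | h | h | ⟨h1, h2⟩ | ⟨h1, h2⟩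
        · omega
        · have := (hbound x0 hx0S).1; omega
        · omega
        · have := (hbound x hxS).1; omega
        · omega
      have hlt' : ((β + 1 - (c0 + 1)).toNat : ℤ) = β + 1 - (c0 + 1) := by omega
      have hN' : (β + 1 - (c0 + 1)).toNat < N := by omega
      have hrec := IH _ hN' (c0 + 1) β hlt'.symm {x | x ∈ S ∧ c0 + 1 ≤ x.2}
        (fun x hx => ⟨hx.2, (hbound x hx.1).2.1, (hbound x hx.1).2.2⟩)
        (fun x hx y hy => hpair x hx.1 y hy.1)
        hcov'
      have : β + 1 - α = (c0 - α + 1) + (β + 1 - (c0 + 1)) := by ring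
      rw [this]
      exact dvd_add hdvd0 hrec
    · have : β + 1 - α = 0 := by omega
      rw [this]
      exact dvd_zero _

/-- Law B: adjacent isolated-no-overarc vertices differ by `1` mod `1-w`. -/
lemma lawB {w : ℤ} (hw : w ≤ -1) {H : Set Arc} (hH : IsHomConfig w H)
    {v v' : ℤ} (hv : v ∈ NoOverarcIsolated H) (hv' : v' ∈ NoOverarcIsolated H)
    (hlt : v < v') (hadj : ∀ u ∈ NoOverarcIsolated H, ¬ (v < u ∧ u < v')) :
    (1 - w) ∣ (v' - v - 1) := by
  have key := cover_dvd hw (v' - v - 1).toNat (v + 1) (v' - 1) (by omega)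
    {x | x ∈ H ∧ v < x.2 ∧ x.1 < v'}
    (fun x hx => ⟨by have := hx.2.1; omega, by have := hx.2.2; omega, (hH.1 x hx.1).2.2⟩)
    (fun x hx y hy => by
      by_cases hxy : x = y
      · exact Or.inl hxy
      · exact Or.inr (nested_or_disjoint hw hH hx.1 hy.1 hxy))
    ?_
  · have e : v' - 1 + 1 - (v + 1) = v' - v - 1 := by ring
    rwa [e] at key
  · intro p hp1 hp2
    by_contra hnc
    -- p is then isolated with no overarc, contradicting adjacency
    have hpV : p ∈ NoOverarcIsolated H := by
      constructor
      · intro a haH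
        have hadm := hH.1 a haH
        have h21 := hadm.1
        constructor
        · intro ha1
          have ha2v : v < a.2 := by
            rcases lt_trichotomy a.2 v with h | h | h
            · exact absurd ⟨haH, h, by omega⟩ (hv.2 a)
            · exact absurd h (hv.1 a haH).2
            · exact h
          exact hnc ⟨a, ⟨haH, ha2v, by omega⟩, by omega, by omega⟩
        · intro ha2
          have ha1v' : a.1 < v' := by
            rcases lt_trichotomy a.1 v' with h | h | h
            · exact h
            · exact absurd h (hv'.1 a haH).1
            · exact absurd ⟨haH, by omega, h⟩ (hv'.2 a)
          exact hnc ⟨a, ⟨haH, by omega, ha1v'⟩, by omega, by omega⟩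
      · rintro a ⟨haH, ha2, ha1⟩
        have ha2v : v < a.2 := by
          rcases lt_trichotomy a.2 v with h | h | h
          · exact absurd ⟨haH, h, by omega⟩ (hv.2 a)
          · exact absurd h (hv.1 a haH).2
          · exact h
        have ha1v' : a.1 < v' := by
          rcases lt_trichotomy a.1 v' with h | h | h
          · exact h
          · exact absurd h (hv'.1 a haH).1
          · exact absurd ⟨haH, by omega, h⟩ (hv'.2 a)
        exact hnc ⟨a, ⟨haH, ha2v, ha1v'⟩, by omega, by omega⟩
    exact hadj p hpV ⟨by omega, by omega⟩


/-- The main counting argument. -/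
lemma no_big_subset {w : ℤ} (hw : w ≤ -1) {H : Set Arc} (hH : IsHomConfig w H)
    (T : Finset ℤ) (hTV : ↑T ⊆ NoOverarcIsolated H) (hTc : T.card = (-w).toNat + 1) :
    False := by
  classical
  set V := NoOverarcIsolated H with hV
  have hne : T.Nonempty := Finset.card_pos.mp (by omega)
  set a := T.min' hne with hadef
  set b := T.max' hne with hbdef
  set T' := (Finset.Icc a b).filter (· ∈ V) with hT'def
  have hT'V : ∀ u ∈ T', u ∈ V := fun u hu => (Finset.mem_filter.mp hu).2
  have hT'lb : ∀ u ∈ T', a ≤ u := fun u hu =>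
    (Finset.mem_Icc.mp (Finset.mem_filter.mp hu).1).1
  have hT'ub : ∀ u ∈ T', u ≤ b := fun u hu =>
    (Finset.mem_Icc.mp (Finset.mem_filter.mp hu).1).2
  have hsub : T ⊆ T' := by
    intro t ht
    exact Finset.mem_filter.mpr ⟨Finset.mem_Icc.mpr ⟨Finset.min'_le T t ht,
      Finset.le_max' T t ht⟩, hTV ht⟩
  have hcardle : (-w).toNat + 1 ≤ T'.card := hTc ▸ Finset.card_le_card hsub
  have haT' : a ∈ T' := hsub (T.min'_mem hne)
  -- the chain
  have chain : ∀ k : ℕ, k < T'.card →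
      ∃ u ∈ T', (T'.filter (· < u)).card = k ∧ (1 - w) ∣ (u - a - k) := by
    intro k
    induction k with
    | zero =>
      intro _
      refine ⟨a, haT', ?_, by simp⟩
      rw [Finset.card_eq_zero, Finset.filter_eq_empty_iff]
      intro u hu
      exact not_lt.mpr (hT'lb u hu)
    | succ k ih =>
      intro hk
      obtain ⟨u, huT', hcard, hdvd⟩ := ih (by omega)
      have hup : (T'.filter (u < ·)).Nonempty := by
        by_contra hempty
        rw [Finset.not_nonempty_iff_eq_empty, Finset.filter_eq_empty_iff] at hempty
        have hss : T' ⊆ insert u (T'.filter (· < u)) := by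
          intro t ht
          rcases lt_trichotomy t u with h | h | h
          · exact Finset.mem_insert_of_mem (Finset.mem_filter.mpr ⟨ht, h⟩)
          · subst h; exact Finset.mem_insert_self _ _
          · exact absurd h (hempty ht)
        have := Finset.card_le_card hss
        have := Finset.card_insert_le u (T'.filter (· < u))
        omega
      set u' := (T'.filter (u < ·)).min' hup with hu'def
      have hu'mem := (T'.filter (u < ·)).min'_mem hup
      have hu'T' : u' ∈ T' := (Finset.mem_filter.mp hu'mem).1
      have huu' : u < u' := (Finset.mem_filter.mp hu'mem).2
      have hadj : ∀ z ∈ V, ¬ (u < z ∧ z < u') := by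
        rintro z hzV ⟨hz1, hz2⟩
        have hzT' : z ∈ T' := Finset.mem_filter.mpr
          ⟨Finset.mem_Icc.mpr ⟨le_trans (hT'lb u huT') hz1.le,
            le_trans hz2.le (hT'ub u' hu'T')⟩, hzV⟩
        have : u' ≤ z := Finset.min'_le _ z (Finset.mem_filter.mpr ⟨hzT', hz1⟩)
        omega
      have hlaw : (1 - w) ∣ (u' - u - 1) :=
        lawB hw hH (hT'V u huT') (hT'V u' hu'T') huu' hadj
      have hfeq : T'.filter (· < u') = insert u (T'.filter (· < u)) := by
        ext t
        simp only [Finset.mem_filter, Finset.mem_insert]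
        constructor
        · rintro ⟨ht, htu'⟩
          rcases lt_trichotomy t u with h | h | h
          · exact Or.inr ⟨ht, h⟩
          · exact Or.inl h
          · exfalso
            have : u' ≤ t := Finset.min'_le _ t (Finset.mem_filter.mpr ⟨ht, h⟩)
            omega
        · rintro (rfl | ⟨ht, htu⟩)
          · exact ⟨huT', huu'⟩
          · exact ⟨ht, by omega⟩
      refine ⟨u', hu'T', ?_, ?_⟩
      · rw [hfeq, Finset.card_insert_of_notMem (by simp), hcard]
      · have : u' - a - (k + 1 : ℕ) = (u - a - k) + (u' - u - 1) := by push_cast; ring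
        rw [this]
        exact dvd_add hdvd hlaw
  obtain ⟨u, huT', hucard, hudvd⟩ := chain (-w).toNat (by omega)
  have hau : a < u := by
    have hpos : 0 < (T'.filter (· < u)).card := by omega
    obtain ⟨z, hz⟩ := Finset.card_pos.mp hpos
    have hz' := Finset.mem_filter.mp hz
    have := hT'lb z hz'.1
    omega
  have hcast : ((-w).toNat : ℤ) = -w := by omega
  rw [hcast] at hudvd
  refine banA hw hH (hT'V a haT') (hT'V u huT') hau ?_
  have : u - a + 1 = (u - a - -w) + (1 - w) := by ring
  rw [this]
  exact dvd_add hudvd (dvd_refl _)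



/-- Lemma 3.3: a `|w|`-Hom-configuration has at most `|w|` isolated vertices with no
overarc. -/
theorem stmt4 (w : ℤ) (hw : w ≤ -1) (H : Set Arc) (hH : IsHomConfig w H) :
    (NoOverarcIsolated H).Finite ∧ ((NoOverarcIsolated H).ncard : ℤ) ≤ -w := by
  have hfin : (NoOverarcIsolated H).Finite := by
    by_contra hinf
    have hinf' : (NoOverarcIsolated H).Infinite := hinf
    obtain ⟨T, hTV, hTc⟩ := hinf'.exists_subset_card_eq ((-w).toNat + 1)
    exact no_big_subset hw hH T hTV hTc
  refine ⟨hfin, ?_⟩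
  by_contra hgt
  push_neg at hgt
  have hle : (-w).toNat + 1 ≤ (NoOverarcIsolated H).ncard := by omega
  have : Fintype (NoOverarcIsolated H) := hfin.fintype
  rw [Set.ncard_eq_toFinset_card'] at hle
  obtain ⟨T, hTsub, hTc⟩ := Finset.exists_subset_card_eq hle
  refine no_big_subset hw hH T ?_ hTc
  intro t ht
  have := hTsub ht
  rwa [Set.mem_toFinset] at this

end SphericalArcs
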